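/- Let α be real with ‖α‖ > 0, and let f be a real-valued, continuously differentiable, monotone function on [Q, Q+P] (Q integer, P positive integer). Then |∑_{x=Q+1}^{Q+P} exp(2πiαx) f(x)| ≤ C·(|f(Q+P)| + |f(Q)|)·min(P, 1/‖α‖) for some absolute constant C. -/

import Mathlib

open Complex Finset

lemma abs_exp_theta_sub_one (θ : ℝ) :
    ‖(Complex.exp (θ * I) - 1)‖ = 2 * |Real.sin (θ / 2)| := by
  have h : Complex.exp (θ * I) - 1 = ((Real.cos θ - 1 : ℝ) : ℂ) + (Real.sin θ : ℝ) * I := by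
    rw [Complex.exp_mul_I, ← Complex.ofReal_cos, ← Complex.ofReal_sin]
    push_cast; ring
  rw [h, Complex.norm_add_mul_I]
  have hs : Real.sin θ ^ 2 + Real.cos θ ^ 2 = 1 := Real.sin_sq_add_cos_sq θ
  have hc : Real.cos θ = 1 - 2 * Real.sin (θ / 2) ^ 2 := by
    have h := Real.sin_sq_eq_half_sub (θ / 2)
    have h2 : 2 * (θ / 2) = θ := by ring
    rw [h2] at h
    linarith
  have : (Real.cos θ - 1) ^ 2 + Real.sin θ ^ 2 = (2 * |Real.sin (θ / 2)|) ^ 2 := by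
    rw [mul_pow, _root_.sq_abs]; nlinarith
  rw [this, Real.sqrt_sq (by positivity)]

lemma aux_mono (α : ℝ) (Q : ℤ) (P : ℕ) (f : ℝ → ℝ)
    (hP : 0 < P)
    (hα : 0 < |α - (round α : ℝ)|)
    (hmono : MonotoneOn f (Set.Icc (Q : ℝ) ((Q : ℝ) + P))) :
    ‖(∑ x ∈ Finset.Icc (Q + 1) (Q + P),
        Complex.exp (2 * Real.pi * Complex.I * α * x) * (f x : ℂ))‖ ≤
      3 * (|f ((Q : ℝ) + P)| + |f (Q : ℝ)|) *
        min (P : ℝ) (1 / |α - (round α : ℝ)|) := by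
  set δ : ℝ := |α - (round α : ℝ)| with hδdef
  have hδhalf : δ ≤ 1 / 2 := abs_sub_round α
  set z : ℂ := Complex.exp (2 * Real.pi * Complex.I * α) with hzdef
  have hz0 : z ≠ 0 := Complex.exp_ne_zero _
  have hzabs : ‖z‖ = 1 := by
    rw [hzdef, Complex.norm_exp]
    norm_num [Complex.mul_re, Complex.mul_im]
  -- z ≠ 1
  have hz1 : z ≠ 1 := by
    intro h
    rw [hzdef, Complex.exp_eq_one_iff] at h
    obtain ⟨n, hn⟩ := h
    have : (2 * Real.pi * Complex.I) * α = (2 * Real.pi * Complex.I) * n := by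
      rw [hn]; ring
    have hpi : (2 * Real.pi * Complex.I) ≠ 0 := by
      simp [Real.pi_ne_zero, Complex.I_ne_zero]
    have hαn : (α : ℂ) = (n : ℂ) := mul_left_cancel₀ hpi this
    have hαr : α = (n : ℝ) := by exact_mod_cast hαn
    rw [hδdef, hαr] at hα
    rw [round_intCast] at hα
    simp at hα
  -- lower bound on |z - 1|
  have hlow : 4 * δ ≤ ‖(z - 1)‖ := by
    have hz' : z = Complex.exp ((2 * Real.pi * α : ℝ) * I) := by
      rw [hzdef]; push_cast; ring_nf
    rw [hz', abs_exp_theta_sub_one]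
    have h2 : (2 * Real.pi * α) / 2 = Real.pi * α := by ring
    rw [h2]
    -- |sin (π α)| = |sin (π (α - round α))|
    have hper : |Real.sin (Real.pi * α)| = |Real.sin (Real.pi * (α - round α))| := by
      have : Real.pi * α = Real.pi * (α - round α) + (round α : ℤ) * Real.pi := by ring
      rw [this, Real.sin_add_int_mul_pi, abs_mul]
      have h1 : |((-1 : ℝ)) ^ (round α)| = 1 := by
        rcases Int.even_or_odd (round α) with h | h
        · rw [h.neg_one_zpow]; norm_num
        · rw [Odd.neg_one_zpow h]; norm_num
      rw [h1, one_mul]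
    rw [hper]
    set β : ℝ := α - round α with hβ
    have habs : |Real.sin (Real.pi * β)| = Real.sin (Real.pi * |β|) := by
      rcases le_or_gt 0 β with h | h
      · rw [_root_.abs_of_nonneg h, _root_.abs_of_nonneg]
        exact Real.sin_nonneg_of_nonneg_of_le_pi (by positivity)
          (by nlinarith [Real.pi_pos, hδhalf, _root_.abs_of_nonneg h])
      · rw [_root_.abs_of_neg h]
        have he : Real.pi * -β = -(Real.pi * β) := by ring
        have hnn : 0 ≤ Real.sin (Real.pi * -β) := by
          apply Real.sin_nonneg_of_nonneg_of_le_pi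
          · nlinarith [Real.pi_pos]
          · nlinarith [Real.pi_pos, hδhalf, _root_.abs_of_neg h]
        rw [he, Real.sin_neg] at hnn ⊢
        rw [_root_.abs_of_nonpos (by linarith)]
    rw [habs]
    have hjordan : 2 / Real.pi * (Real.pi * |β|) ≤ Real.sin (Real.pi * |β|) := by
      apply Real.mul_le_sin (by positivity)
      nlinarith [Real.pi_pos, hδhalf]
    have : 2 / Real.pi * (Real.pi * |β|) = 2 * |β| := by
      field_simp
    rw [this] at hjordan
    have hδβ : δ = |β| := rfl
    linarith
  have hδpos : 0 < δ := hα
  -- partial geometric sums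
  have hGbound : ∀ k : ℕ, k ≤ P →
      ‖(∑ j ∈ range k, z ^ ((Q : ℤ) + 1 + j))‖ ≤
        min (P : ℝ) (1 / (2 * δ)) := by
    intro k hk
    apply le_min
    · calc ‖(∑ j ∈ range k, z ^ ((Q : ℤ) + 1 + j))‖
          ≤ ∑ j ∈ range k, ‖(z ^ ((Q : ℤ) + 1 + j))‖ := by
            exact norm_sum_le _ _
        _ = ∑ j ∈ range k, (1 : ℝ) := by
            refine Finset.sum_congr rfl fun j _ => ?_
            rw [norm_zpow, hzabs, one_zpow]
        _ = k := by simp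
        _ ≤ P := by exact_mod_cast hk
    · have hfac : (∑ j ∈ range k, z ^ ((Q : ℤ) + 1 + j)) =
          z ^ ((Q : ℤ) + 1) * ((z ^ k - 1) / (z - 1)) := by
        rw [← geom_sum_eq hz1]
        rw [Finset.mul_sum]
        refine Finset.sum_congr rfl fun j _ => ?_
        rw [← zpow_natCast z j, ← zpow_add₀ hz0]
      rw [hfac, norm_mul, norm_zpow, hzabs, one_zpow, one_mul, norm_div]
      have hnum : ‖(z ^ k - 1)‖ ≤ 2 := by
        calc ‖(z ^ k - 1)‖ ≤ ‖(z ^ k)‖ + ‖(1 : ℂ)‖ :=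
              norm_sub_le _ _
          _ = 2 := by rw [norm_pow, hzabs, one_pow, norm_one]; norm_num
      have hden : 0 < ‖(z - 1)‖ := by linarith
      calc ‖(z ^ k - 1)‖ / ‖(z - 1)‖ ≤ 2 / (4 * δ) :=
            div_le_div₀ (by norm_num) hnum (by positivity) hlow
        _ = 1 / (2 * δ) := by field_simp; ring
  -- reindex the sum
  set M : ℝ := min (P : ℝ) (1 / (2 * δ)) with hM
  have hM0 : 0 ≤ M := le_min (by positivity) (by positivity)
  have hreindex : (∑ x ∈ Finset.Icc (Q + 1) (Q + P),
        Complex.exp (2 * Real.pi * Complex.I * α * x) * (f x : ℂ)) =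
      ∑ i ∈ range P, ((f ((Q : ℝ) + 1 + i) : ℂ)) • z ^ ((Q : ℤ) + 1 + i) := by
    have hmap : Finset.Icc (Q + 1) (Q + (P : ℤ)) =
        (Finset.range P).map (⟨fun i : ℕ => Q + 1 + (i : ℤ), show Function.Injective (fun i : ℕ => Q + 1 + (i : ℤ)) from fun a b h => by simpa using h⟩ : ℕ ↪ ℤ) := by
      ext x
      simp only [Finset.mem_Icc, Finset.mem_map, Finset.mem_range,
        Function.Embedding.coeFn_mk]
      constructor
      · intro ⟨h1, h2⟩
        exact ⟨(x - (Q + 1)).toNat, by omega, by omega⟩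
      · rintro ⟨a, ha, rfl⟩
        omega
    rw [hmap, Finset.sum_map]
    refine Finset.sum_congr rfl fun i _ => ?_
    simp only [Function.Embedding.coeFn_mk, smul_eq_mul]
    rw [mul_comm ((f ((Q : ℝ) + 1 + i) : ℂ)) _]
    congr 1
    · rw [hzdef, ← Complex.exp_int_mul]
      congr 1
      push_cast; ring
    · push_cast; ring_nf
  rw [hreindex]
  -- Abel summation
  rw [Finset.sum_range_by_parts]
  -- boundary values
  have hcast : ((Q : ℝ) + 1 + ((P - 1 : ℕ) : ℝ)) = (Q : ℝ) + P := by
    have : ((P - 1 : ℕ) : ℝ) = (P : ℝ) - 1 := by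
      have : (1 : ℕ) ≤ P := hP
      push_cast [this]; ring
    rw [this]; ring
  have hmem : ∀ i : ℕ, i < P → ((Q : ℝ) + 1 + i) ∈ Set.Icc (Q : ℝ) ((Q : ℝ) + P) := by
    intro i hi
    constructor
    · have : (0 : ℝ) ≤ 1 + i := by positivity
      linarith
    · have : (i : ℝ) + 1 ≤ P := by exact_mod_cast hi
      linarith
  have hQmem : (Q : ℝ) ∈ Set.Icc (Q : ℝ) ((Q : ℝ) + P) := by
    constructor
    · exact le_refl _
    · have : (0 : ℝ) < P := by exact_mod_cast hP
      linarith
  have hQPmem : ((Q : ℝ) + P) ∈ Set.Icc (Q : ℝ) ((Q : ℝ) + P) := by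
    constructor
    · have : (0 : ℝ) < P := by exact_mod_cast hP
      linarith
    · exact le_refl _
  have hQ1mem : ((Q : ℝ) + 1) ∈ Set.Icc (Q : ℝ) ((Q : ℝ) + P) := by
    constructor
    · linarith
    · have : (1 : ℝ) ≤ P := by exact_mod_cast hP
      linarith
  -- bound |f (Q+1)|
  have hf1 : |f ((Q : ℝ) + 1)| ≤ |f ((Q : ℝ) + P)| + |f (Q : ℝ)| := by
    have h1 : f (Q : ℝ) ≤ f ((Q : ℝ) + 1) := hmono hQmem hQ1mem (by linarith)
    have h2 : f ((Q : ℝ) + 1) ≤ f ((Q : ℝ) + P) := by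
      apply hmono hQ1mem hQPmem
      have : (1 : ℝ) ≤ P := by exact_mod_cast hP
      linarith
    rw [abs_le]
    constructor
    · have := neg_abs_le (f (Q : ℝ))
      have := abs_nonneg (f ((Q : ℝ) + P))
      linarith
    · have := le_abs_self (f ((Q : ℝ) + P))
      have := abs_nonneg (f (Q : ℝ))
      linarith
  -- bound the variation sum
  have hvar : ∑ i ∈ range (P - 1),
      ‖(((f ((Q : ℝ) + 1 + (i + 1 : ℕ)) : ℂ)) - ((f ((Q : ℝ) + 1 + i) : ℂ)))‖
      ≤ 2 * |f ((Q : ℝ) + P)| + |f (Q : ℝ)| := by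
    have heach : ∀ i ∈ range (P - 1),
        ‖(((f ((Q : ℝ) + 1 + (i + 1 : ℕ)) : ℂ)) - ((f ((Q : ℝ) + 1 + i) : ℂ)))‖
          = f ((Q : ℝ) + 1 + (i + 1 : ℕ)) - f ((Q : ℝ) + 1 + i) := by
      intro i hi
      rw [Finset.mem_range] at hi
      rw [← Complex.ofReal_sub, Complex.norm_real, Real.norm_eq_abs, _root_.abs_of_nonneg]
      apply sub_nonneg.2
      apply hmono (hmem i (by omega)) (hmem (i + 1) (by omega))
      push_cast; linarith
    rw [Finset.sum_congr rfl heach]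
    have htel : ∑ i ∈ range (P - 1),
        (f ((Q : ℝ) + 1 + (i + 1 : ℕ)) - f ((Q : ℝ) + 1 + i))
        = f ((Q : ℝ) + 1 + ((P - 1 : ℕ) : ℝ)) - f ((Q : ℝ) + 1 + (0 : ℕ)) := by
      have := Finset.sum_range_sub (fun i : ℕ => f ((Q : ℝ) + 1 + i)) (P - 1)
      simpa using this
    rw [htel, hcast]
    have h0 : ((Q : ℝ) + 1 + ((0 : ℕ) : ℝ)) = (Q : ℝ) + 1 := by norm_num
    rw [h0]
    have := le_abs_self (f ((Q : ℝ) + P))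
    have := neg_abs_le (f ((Q : ℝ) + 1))
    linarith
  -- final estimate
  have key : ‖(((f ((Q : ℝ) + 1 + ((P - 1 : ℕ) : ℝ)) : ℂ)) • (∑ j ∈ range P, z ^ ((Q : ℤ) + 1 + j)) -
        ∑ i ∈ range (P - 1), (((f ((Q : ℝ) + 1 + ((i + 1 : ℕ) : ℝ)) : ℂ) -
            (f ((Q : ℝ) + 1 + (i : ℕ)) : ℂ))) •
          (∑ j ∈ range (i + 1), z ^ ((Q : ℤ) + 1 + j)))‖
      ≤ (3 * |f ((Q : ℝ) + P)| + |f (Q : ℝ)|) * M := by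
    calc ‖_‖
        ≤ ‖(((f ((Q : ℝ) + 1 + ((P - 1 : ℕ) : ℝ)) : ℂ)) •
              (∑ j ∈ range P, z ^ ((Q : ℤ) + 1 + j)))‖ +
          ‖(∑ i ∈ range (P - 1), (((f ((Q : ℝ) + 1 + ((i + 1 : ℕ) : ℝ)) : ℂ) -
              (f ((Q : ℝ) + 1 + (i : ℕ)) : ℂ))) •
            (∑ j ∈ range (i + 1), z ^ ((Q : ℤ) + 1 + j)))‖ := norm_sub_le _ _
      _ ≤ |f ((Q : ℝ) + P)| * M + (2 * |f ((Q : ℝ) + P)| + |f (Q : ℝ)|) * M := by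
          gcongr ?_ + ?_
          · rw [smul_eq_mul, norm_mul, Complex.norm_real, Real.norm_eq_abs, hcast]
            exact mul_le_mul_of_nonneg_left (hGbound P le_rfl) (abs_nonneg _)
          · calc ‖(∑ i ∈ range (P - 1), _)‖
                ≤ ∑ i ∈ range (P - 1), ‖((((f ((Q : ℝ) + 1 + ((i + 1 : ℕ) : ℝ)) : ℂ) -
                    (f ((Q : ℝ) + 1 + (i : ℕ)) : ℂ))) •
                  (∑ j ∈ range (i + 1), z ^ ((Q : ℤ) + 1 + j)))‖ := norm_sum_le _ _
              _ ≤ ∑ i ∈ range (P - 1),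
                  ‖(((f ((Q : ℝ) + 1 + ((i + 1 : ℕ) : ℝ)) : ℂ) -
                    (f ((Q : ℝ) + 1 + (i : ℕ)) : ℂ)))‖ * M := by
                  refine Finset.sum_le_sum fun i hi => ?_
                  rw [Finset.mem_range] at hi
                  rw [smul_eq_mul, norm_mul]
                  exact mul_le_mul_of_nonneg_left (hGbound (i + 1) (by omega))
                    (norm_nonneg _)
              _ = (∑ i ∈ range (P - 1),
                  ‖(((f ((Q : ℝ) + 1 + ((i + 1 : ℕ) : ℝ)) : ℂ) -
                    (f ((Q : ℝ) + 1 + (i : ℕ)) : ℂ)))‖) * M := by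
                  rw [Finset.sum_mul]
              _ ≤ (2 * |f ((Q : ℝ) + P)| + |f (Q : ℝ)|) * M := by
                  apply mul_le_mul_of_nonneg_right _ hM0
                  exact_mod_cast hvar
      _ = (3 * |f ((Q : ℝ) + P)| + |f (Q : ℝ)|) * M := by ring
  refine le_trans key ?_
  have hMle : M ≤ min (P : ℝ) (1 / δ) := by
    apply min_le_min le_rfl
    apply div_le_div_of_nonneg_left (by norm_num) hδpos
    linarith
  have hmin0 : 0 ≤ min (P : ℝ) (1 / δ) := le_min (by positivity) (by positivity)
  calc (3 * |f ((Q : ℝ) + P)| + |f (Q : ℝ)|) * M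
      ≤ (3 * (|f ((Q : ℝ) + P)| + |f (Q : ℝ)|)) * min (P : ℝ) (1 / δ) := by
        apply mul_le_mul _ hMle hM0 (by positivity)
        have := abs_nonneg (f (Q : ℝ))
        linarith
    _ = 3 * (|f ((Q : ℝ) + P)| + |f (Q : ℝ)|) * min (P : ℝ) (1 / δ) := by ring

theorem exp_sum_weighted_bound :
    ∃ C : ℝ, 0 < C ∧ ∀ (α : ℝ) (Q : ℤ) (P : ℕ) (f : ℝ → ℝ),
      0 < P →
      0 < |α - (round α : ℝ)| →
      ContDiffOn ℝ 1 f (Set.Icc (Q : ℝ) ((Q : ℝ) + P)) →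
      (MonotoneOn f (Set.Icc (Q : ℝ) ((Q : ℝ) + P)) ∨
        AntitoneOn f (Set.Icc (Q : ℝ) ((Q : ℝ) + P))) →
      ‖(∑ x ∈ Finset.Icc (Q + 1) (Q + P),
          Complex.exp (2 * Real.pi * Complex.I * α * x) * (f x : ℂ))‖ ≤
        C * (|f ((Q : ℝ) + P)| + |f (Q : ℝ)|) *
          min (P : ℝ) (1 / |α - (round α : ℝ)|) := by
  refine ⟨3, by norm_num, fun α Q P f hP hα _ hm => ?_⟩
  rcases hm with hm | hm
  · exact aux_mono α Q P f hP hα hm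
  · have h := aux_mono α Q P (-f) hP hα hm.neg
    have hsum : (∑ x ∈ Finset.Icc (Q + 1) (Q + (P : ℤ)),
        Complex.exp (2 * Real.pi * Complex.I * α * x) * (((-f) x : ℝ) : ℂ)) =
        -(∑ x ∈ Finset.Icc (Q + 1) (Q + (P : ℤ)),
          Complex.exp (2 * Real.pi * Complex.I * α * x) * ((f x : ℝ) : ℂ)) := by
      rw [← Finset.sum_neg_distrib]
      refine Finset.sum_congr rfl fun x _ => ?_
      simp [Pi.neg_apply]
    rw [hsum, norm_neg] at h
    simpa [Pi.neg_apply, abs_neg] using h
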